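/- Let A = ℂ⟨x,y⟩ and f ∈ A. If (∂f/∂x)'' (∂f/∂x)' x = x (∂f/∂x)'' (∂f/∂x)' in A (i.e., the element (∂f/∂x)''(∂f/∂x)' commutes with x), then modulo commutators f lies in ℂ[x] + ℂ[y] + [A,A]. -/

import Mathlib

open TensorProduct

noncomputable section

abbrev A2 := FreeAlgebra ℂ (Fin 2)

def Xg : A2 := FreeAlgebra.ι ℂ 0
def Yg : A2 := FreeAlgebra.ι ℂ 1

/-- `u ⊗ v ↦ v * u`, i.e. Sweedler `(∂f/∂x)'' (∂f/∂x)'`. -/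
def mulRev : A2 ⊗[ℂ] A2 →ₗ[ℂ] A2 :=
  (LinearMap.mul' ℂ A2) ∘ₗ (TensorProduct.comm ℂ A2 A2).toLinearMap

def commSpan : Submodule ℂ A2 :=
  Submodule.span ℂ {z : A2 | ∃ a b : A2, z = a * b - b * a}

set_option maxHeartbeats 1000000

namespace S6
abbrev Wd : Type := FreeMonoid (Fin 2)
abbrev B : Type := MonoidAlgebra ℂ Wd

def ow (w : List (Fin 2)) : B := MonoidAlgebra.single (FreeMonoid.ofList w) 1

lemma ow_mul (u v : List (Fin 2)) : ow u * ow v = ow (u ++ v) := by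
  simp [ow, MonoidAlgebra.single_mul_single]

lemma ow_nil : ow [] = (1 : B) := rfl

def extMap {V : Type*} [AddCommGroup V] [Module ℂ V] (g : List (Fin 2) → V) : B →ₗ[ℂ] V :=
  (Finsupp.lsum ℂ fun w => LinearMap.toSpanSingleton ℂ V (g (FreeMonoid.toList w))) ∘ₗ
    (MonoidAlgebra.coeffLinearEquiv ℂ).toLinearMap

@[simp] lemma extMap_ow {V : Type*} [AddCommGroup V] [Module ℂ V] (g : List (Fin 2) → V)
    (w : List (Fin 2)) : extMap g (ow w) = g w := by
  show (Finsupp.lsum ℂ fun w => LinearMap.toSpanSingleton ℂ V (g (FreeMonoid.toList w)))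
      (Finsupp.single (FreeMonoid.ofList w) 1) = g w
  rw [Finsupp.lsum_single, LinearMap.toSpanSingleton_apply, one_smul]
  rfl

def commSpanB : Submodule ℂ B :=
  Submodule.span ℂ {z : B | ∃ a b : B, z = a * b - b * a}

lemma rot_mem (u v : List (Fin 2)) : ow (u ++ v) - ow (v ++ u) ∈ commSpanB := by
  rw [← ow_mul, ← ow_mul]
  exact Submodule.subset_span ⟨ow u, ow v, rfl⟩

/-- word-level double derivation -/
def dW : List (Fin 2) → B ⊗[ℂ] B
  | [] => 0
  | i :: t => (ow [i] ⊗ₜ (1 : B)) * dW t + (if i = 0 then (1 : B) ⊗ₜ ow t else 0)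

def DB : B →ₗ[ℂ] B ⊗[ℂ] B := extMap dW

lemma dW_append (u v : List (Fin 2)) :
    dW (u ++ v) = (ow u ⊗ₜ (1 : B)) * dW v + dW u * ((1 : B) ⊗ₜ ow v) := by
  induction u with
  | nil =>
    simp [dW, ow_nil, Algebra.TensorProduct.one_def.symm]
  | cons i t ih =>
    show dW (i :: (t ++ v)) = _
    rw [dW, ih, dW]
    rcases eq_or_ne i 0 with hi | hi
    · simp only [hi, reduceIte, mul_add, add_mul, ← mul_assoc,
        Algebra.TensorProduct.tmul_mul_tmul, mul_one, one_mul, ow_mul, List.cons_append,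
        List.nil_append]
      try abel
    · simp only [if_neg hi, add_zero, mul_add, add_mul, ← mul_assoc,
        Algebra.TensorProduct.tmul_mul_tmul, mul_one, one_mul, ow_mul, List.cons_append,
        List.nil_append]
      try abel

lemma one_eq_ow : (1 : B) = ow [] := rfl

lemma DB_ow (w : List (Fin 2)) : DB (ow w) = dW w := extMap_ow _ _

lemma DB_leibniz (a b : B) :
    DB (a * b) = (a ⊗ₜ[ℂ] (1 : B)) * DB b + DB a * ((1 : B) ⊗ₜ[ℂ] b) := by
  induction a using MonoidAlgebra.induction_on with
  | of u =>
    induction b using MonoidAlgebra.induction_on with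
    | of v =>
      show DB (ow u.toList * ow v.toList) = (ow u.toList ⊗ₜ[ℂ] (1:B)) * DB (ow v.toList)
          + DB (ow u.toList) * ((1:B) ⊗ₜ[ℂ] ow v.toList)
      rw [ow_mul, DB_ow, DB_ow, DB_ow, dW_append]
    | add f g hf hg =>
      rw [mul_add, map_add, hf, hg, map_add]
      simp only [mul_add, add_mul, TensorProduct.tmul_add, TensorProduct.add_tmul]
      abel
    | smul r f hf =>
      rw [mul_smul_comm, map_smul, hf, map_smul, smul_add]
      simp only [TensorProduct.tmul_smul, mul_smul_comm, smul_mul_assoc]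
  | add f g hf hg =>
    rw [add_mul, map_add, hf, hg, map_add]
    simp only [mul_add, add_mul, TensorProduct.tmul_add, TensorProduct.add_tmul]
    abel
  | smul r f hf =>
    rw [smul_mul_assoc, map_smul, hf, map_smul, smul_add]
    simp only [← TensorProduct.smul_tmul', smul_mul_assoc]

def mulRevB : B ⊗[ℂ] B →ₗ[ℂ] B :=
  (LinearMap.mul' ℂ B) ∘ₗ (TensorProduct.comm ℂ B B).toLinearMap

@[simp] lemma mulRevB_tmul (a b : B) : mulRevB (a ⊗ₜ[ℂ] b) = b * a := by
  simp [mulRevB]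

/-- `mid g (a ⊗ b) = b * g * a` -/
def mid (g : B) : B ⊗[ℂ] B →ₗ[ℂ] B :=
  TensorProduct.lift (LinearMap.mk₂ ℂ (fun a b => b * g * a)
    (fun m₁ m₂ n => by simp [mul_add]
    ) (fun c m n => by simp [mul_smul_comm]
    ) (fun m n₁ n₂ => by simp [add_mul]
    ) (fun c m n => by simp [smul_mul_assoc]))

@[simp] lemma mid_tmul (g a b : B) : mid g (a ⊗ₜ[ℂ] b) = b * g * a := rfl

lemma mid_one (s : B ⊗[ℂ] B) : mid 1 s = mulRevB s := by
  induction s with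
  | zero => simp
  | tmul a b => simp
  | add x y hx hy => rw [map_add, map_add, hx, hy]

lemma mid_absorb (v : List (Fin 2)) (i : Fin 2) (s : B ⊗[ℂ] B) :
    mid (ow v) ((ow [i] ⊗ₜ[ℂ] (1 : B)) * s) = mid (ow (v ++ [i])) s := by
  induction s with
  | zero => simp
  | tmul a b =>
    rw [Algebra.TensorProduct.tmul_mul_tmul, one_mul, mid_tmul, mid_tmul, ← ow_mul]
    noncomm_ring
  | add x y hx hy => rw [mul_add, map_add, hx, hy, map_add]

lemma count_cast_succ (t : List (Fin 2)) :
    ((List.count 0 (0 :: t) : ℕ) : ℂ) = (List.count 0 t : ℂ) + 1 := by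
  rw [List.count_cons]
  push_cast
  simp

lemma stepB_word (w : List (Fin 2)) : ∀ v : List (Fin 2),
    ow [0] * mid (ow v) (dW w) - ((List.count 0 w : ℕ) : ℂ) • ow (w ++ v) ∈ commSpanB := by
  induction w with
  | nil => intro v; simp [dW]
  | cons i t ih =>
    intro v
    rcases eq_or_ne i 0 with hi | hi
    · subst hi
      have hd : mid (ow v) (dW (0 :: t))
          = mid (ow (v ++ [0])) (dW t) + ow t * ow v := by
        rw [dW, if_pos rfl, map_add, mid_absorb, mid_tmul, mul_one]
      have h1 := ih (v ++ [0])
      have h2 := Submodule.smul_mem commSpanB ((List.count 0 t : ℕ) : ℂ)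
        (rot_mem (t ++ v) [0])
      have h3 := Submodule.add_mem commSpanB h1 h2
      have heq : ow [0] * mid (ow v) (dW (0 :: t))
            - ((List.count 0 (0 :: t) : ℕ) : ℂ) • ow ((0 :: t) ++ v)
          = (ow [0] * mid (ow (v ++ [0])) (dW t)
              - ((List.count 0 t : ℕ) : ℂ) • ow (t ++ (v ++ [0])))
            + ((List.count 0 t : ℕ) : ℂ) • (ow ((t ++ v) ++ [0]) - ow ([0] ++ (t ++ v))) := by
        rw [hd, mul_add, count_cast_succ, ← mul_assoc, ow_mul, ow_mul]
        have e1 : t ++ (v ++ [0]) = (t ++ v) ++ [0] := by simp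
        have e2 : ([0] : List (Fin 2)) ++ (t ++ v) = (0 :: t) ++ v := by simp
        have e3 : (([0] : List (Fin 2)) ++ t) ++ v = (0 :: t) ++ v := by simp
        rw [e1, e2, e3]
        module
      rw [heq]
      exact h3
    · have hd : mid (ow v) (dW (i :: t)) = mid (ow (v ++ [i])) (dW t) := by
        rw [dW, if_neg hi, add_zero, mid_absorb]
      have h1 := ih (v ++ [i])
      have h2 := Submodule.smul_mem commSpanB ((List.count 0 t : ℕ) : ℂ)
        (rot_mem (t ++ v) [i])
      have h3 := Submodule.add_mem commSpanB h1 h2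
      have hc : ((List.count 0 (i :: t) : ℕ) : ℂ) = ((List.count 0 t : ℕ) : ℂ) := by
        rw [List.count_cons]
        simp [hi]
      have heq : ow [0] * mid (ow v) (dW (i :: t))
            - ((List.count 0 (i :: t) : ℕ) : ℂ) • ow ((i :: t) ++ v)
          = (ow [0] * mid (ow (v ++ [i])) (dW t)
              - ((List.count 0 t : ℕ) : ℂ) • ow (t ++ (v ++ [i])))
            + ((List.count 0 t : ℕ) : ℂ) • (ow ((t ++ v) ++ [i]) - ow ([i] ++ (t ++ v))) := by
        rw [hd, hc]
        have e1 : t ++ (v ++ [i]) = (t ++ v) ++ [i] := by simp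
        have e2 : ([i] : List (Fin 2)) ++ (t ++ v) = (i :: t) ++ v := by simp
        rw [e1, e2]
        module
      rw [heq]
      exact h3

def Ecount : B →ₗ[ℂ] B := extMap fun w => ((List.count 0 w : ℕ) : ℂ) • ow w

lemma of_eq_ow (w : Wd) : MonoidAlgebra.of ℂ Wd w = ow (FreeMonoid.toList w) := rfl

lemma stepB (F : B) : ow [0] * mulRevB (DB F) - Ecount F ∈ commSpanB := by
  induction F using MonoidAlgebra.induction_on with
  | of w =>
    rw [of_eq_ow, DB_ow, ← mid_one, Ecount, extMap_ow]
    have := stepB_word (FreeMonoid.toList w) []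
    rw [one_eq_ow]
    simpa using this
  | add f g hf hg =>
    have h3 := Submodule.add_mem commSpanB hf hg
    have heq : ow [0] * mulRevB (DB (f + g)) - Ecount (f + g)
        = (ow [0] * mulRevB (DB f) - Ecount f) + (ow [0] * mulRevB (DB g) - Ecount g) := by
      rw [map_add, map_add, map_add, mul_add]
      abel
    rw [heq]; exact h3
  | smul r f hf =>
    have h3 := Submodule.smul_mem commSpanB r hf
    have heq : ow [0] * mulRevB (DB (r • f)) - Ecount (r • f)
        = r • (ow [0] * mulRevB (DB f) - Ecount f) := by
      rw [map_smul, map_smul, map_smul, mul_smul_comm, smul_sub]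
    rw [heq]; exact h3

/-! ### Step A: centralizer of `x` -/

def spanX : Submodule ℂ B := Submodule.span ℂ (Set.range fun n : ℕ => ow (List.replicate n 0))
def spanY : Submodule ℂ B := Submodule.span ℂ (Set.range fun n : ℕ => ow (List.replicate n 1))

section StepA
variable {c : B} (hc : c * ow [0] = ow [0] * c)

include hc in
lemma relA1 (v : List (Fin 2)) : c.coeff (FreeMonoid.ofList (v ++ [1])) = 0 := by
  have h : (c * ow [0]).coeff (FreeMonoid.ofList (0 :: (v ++ [1])))
      = (ow [0] * c).coeff (FreeMonoid.ofList (0 :: (v ++ [1]))) := by rw [hc]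
  have hL : (c * ow [0]).coeff (FreeMonoid.ofList (0 :: (v ++ [1]))) = 0 := by
    refine MonoidAlgebra.mul_single_apply_of_not_exists_mul 1 c ?_
    rintro ⟨d, hd⟩
    have h2 : (0 :: (v ++ [1]) : List (Fin 2)) = FreeMonoid.toList d ++ [0] :=
      congrArg FreeMonoid.toList hd
    have h3 := congrArg List.getLast? h2
    rw [List.getLast?_concat] at h3
    rw [show (0 :: (v ++ [1]) : List (Fin 2)) = (0 :: v) ++ [1] by simp] at h3
    rw [List.getLast?_concat] at h3
    exact absurd (Option.some.inj h3) (by decide)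
  have hR : (ow [0] * c).coeff (FreeMonoid.ofList (0 :: (v ++ [1])))
      = 1 * c.coeff (FreeMonoid.ofList (v ++ [1])) := by
    refine MonoidAlgebra.single_mul_apply_aux (x := c) _ ?_
    intro a _
    show FreeMonoid.ofList [0] * a = FreeMonoid.ofList [0] * FreeMonoid.ofList (v ++ [1]) ↔ _
    exact mul_right_inj _
  rw [hL] at h
  rw [hR, one_mul] at h
  exact h.symm

include hc in
lemma relA2 (v : List (Fin 2)) :
    c.coeff (FreeMonoid.ofList (0 :: v)) = c.coeff (FreeMonoid.ofList (v ++ [0])) := by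
  have h : (c * ow [0]).coeff (FreeMonoid.ofList (0 :: (v ++ [0])))
      = (ow [0] * c).coeff (FreeMonoid.ofList (0 :: (v ++ [0]))) := by rw [hc]
  have hL : (c * ow [0]).coeff (FreeMonoid.ofList (0 :: (v ++ [0])))
      = c.coeff (FreeMonoid.ofList (0 :: v)) * 1 := by
    refine MonoidAlgebra.mul_single_apply_aux (x := c) _ ?_
    intro a _
    show a * FreeMonoid.ofList [0] = FreeMonoid.ofList ((0 :: v) ++ [0]) ↔ _
    show a * FreeMonoid.ofList [0] = FreeMonoid.ofList (0 :: v) * FreeMonoid.ofList [0] ↔ _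
    exact mul_left_inj _
  have hR : (ow [0] * c).coeff (FreeMonoid.ofList (0 :: (v ++ [0])))
      = 1 * c.coeff (FreeMonoid.ofList (v ++ [0])) := by
    refine MonoidAlgebra.single_mul_apply_aux (x := c) _ ?_
    intro a _
    show FreeMonoid.ofList [0] * a = FreeMonoid.ofList [0] * FreeMonoid.ofList (v ++ [0]) ↔ _
    exact mul_right_inj _
  rw [hL, hR, one_mul, mul_one] at h
  exact h

include hc in
lemma relA3 : ∀ (k : ℕ) (v : List (Fin 2)),
    c.coeff (FreeMonoid.ofList (v ++ [1] ++ List.replicate k 0)) = 0 := by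
  intro k
  induction k with
  | zero => intro v; simpa using relA1 hc v
  | succ k ih =>
    intro v
    have e1 : v ++ [1] ++ List.replicate (k+1) 0
        = ((v ++ [1] ++ List.replicate k 0)) ++ [0] := by
      rw [List.replicate_succ']
      simp
    have e2 : (0 :: (v ++ [1] ++ List.replicate k 0)) = (0 :: v) ++ [1] ++ List.replicate k 0 := by
      simp
    rw [e1, ← relA2 hc, e2]
    exact ih (0 :: v)

include hc in
lemma relA4' (w : List (Fin 2)) : (1 : Fin 2) ∈ w →
    ∀ k : ℕ, c.coeff (FreeMonoid.ofList (w ++ List.replicate k 0)) = 0 := by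
  induction w using List.reverseRecOn with
  | nil => intro hw; simp at hw
  | append_singleton l a ih =>
    intro hw k
    rcases (show ∀ b : Fin 2, b = 0 ∨ b = 1 by decide) a with rfl | rfl
    · have hl : (1 : Fin 2) ∈ l := by
        rcases List.mem_append.mp hw with h | h
        · exact h
        · simp at h
      have e1 : l ++ [(0 : Fin 2)] ++ List.replicate k 0 = l ++ List.replicate (k+1) 0 := by
        rw [List.replicate_succ]
        simp
      rw [e1]
      exact ih hl (k + 1)
    · exact relA3 hc k l

include hc in
lemma relA4 (w : List (Fin 2)) (hw : (1 : Fin 2) ∈ w) : c.coeff (FreeMonoid.ofList w) = 0 := by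
  have h := relA4' hc w hw 0
  simpa using h

include hc in
lemma stepA : c ∈ spanX := by
  have hsum : c.coeff.sum MonoidAlgebra.single = c := MonoidAlgebra.sum_coeff_single c
  rw [← hsum]
  refine Submodule.finsuppSum_mem _ _ _ _ ?_
  intro w hw
  have h1 : ¬ (1 : Fin 2) ∈ FreeMonoid.toList w := by
    intro hmem
    exact hw (by simpa using relA4 hc (FreeMonoid.toList w) hmem)
  have h2 : FreeMonoid.toList w
      = List.replicate (FreeMonoid.toList w).length 0 := by
    rw [List.eq_replicate_length]
    intro b hb
    have : ∀ b : Fin 2, b ≠ 1 → b = 0 := by decide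
    exact this b (fun hb1 => h1 (hb1 ▸ hb))
  have h3 : MonoidAlgebra.single w (c.coeff w) = c.coeff w • ow (FreeMonoid.toList w) := by
    rw [ow]
    show _ = c.coeff w • MonoidAlgebra.single (FreeMonoid.ofList (FreeMonoid.toList w)) 1
    rw [FreeMonoid.ofList_toList, MonoidAlgebra.smul_single', mul_one]
  have hmem : MonoidAlgebra.single w (c.coeff w) ∈ spanX := by
    rw [h3]
    refine Submodule.smul_mem _ _ (Submodule.subset_span ⟨(FreeMonoid.toList w).length, ?_⟩)
    show ow (List.replicate (FreeMonoid.toList w).length 0) = ow (FreeMonoid.toList w)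
    rw [← h2]
  exact hmem

end StepA

lemma X_mul_spanX {a : B} (ha : a ∈ spanX) : ow [0] * a ∈ spanX := by
  induction ha using Submodule.span_induction with
  | mem x hx =>
    obtain ⟨n, rfl⟩ := hx
    rw [ow_mul]
    refine Submodule.subset_span ⟨n + 1, ?_⟩
    show ow (List.replicate (n+1) 0) = ow ([0] ++ List.replicate n 0)
    rw [List.replicate_succ]
    rfl
  | zero => rw [mul_zero]; exact Submodule.zero_mem _
  | add x y hx hy hx' hy' => rw [mul_add]; exact Submodule.add_mem _ hx' hy'
  | smul r x hx hx' => rw [mul_smul_comm]; exact Submodule.smul_mem _ _ hx'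

/-! ### the maps `Rmap`, `P0` -/

def Rmap : B →ₗ[ℂ] B := extMap fun w =>
  if List.count 0 w = 0 then 0 else (((List.count 0 w : ℕ) : ℂ)⁻¹ • ow w)

def P0 : B →ₗ[ℂ] B := extMap fun w => if List.count 0 w = 0 then ow w else 0

lemma R_E (F : B) : Rmap (Ecount F) = F - P0 F := by
  induction F using MonoidAlgebra.induction_on with
  | of w =>
    rw [of_eq_ow, Ecount, extMap_ow, map_smul, Rmap, extMap_ow, P0, extMap_ow]
    by_cases h : List.count 0 (FreeMonoid.toList w) = 0
    · rw [if_pos h, if_pos h, h]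
      simp
    · rw [if_neg h, if_neg h, smul_smul, mul_inv_cancel₀ (by exact_mod_cast h), one_smul,
        sub_zero]
  | add f g hf hg =>
    rw [map_add, map_add, hf, hg, map_add]
    abel
  | smul r f hf =>
    rw [map_smul, map_smul, hf, map_smul, smul_sub]

lemma R_spanX {a : B} (ha : a ∈ spanX) : Rmap a ∈ spanX := by
  induction ha using Submodule.span_induction with
  | mem x hx =>
    obtain ⟨n, rfl⟩ := hx
    rw [Rmap, extMap_ow]
    split
    · exact Submodule.zero_mem _
    · exact Submodule.smul_mem _ _ (Submodule.subset_span ⟨n, rfl⟩)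
  | zero => rw [map_zero]; exact Submodule.zero_mem _
  | add x y hx hy hx' hy' => rw [map_add]; exact Submodule.add_mem _ hx' hy'
  | smul r x hx hx' => rw [map_smul]; exact Submodule.smul_mem _ _ hx'

lemma R_comm_pair (a b : B) : Rmap (a * b - b * a) ∈ commSpanB := by
  induction a using MonoidAlgebra.induction_on with
  | of u =>
    induction b using MonoidAlgebra.induction_on with
    | of v =>
      rw [of_eq_ow, of_eq_ow, ow_mul, ow_mul, map_sub, Rmap, extMap_ow, extMap_ow]
      have hcnt : List.count 0 (FreeMonoid.toList u ++ FreeMonoid.toList v)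
          = List.count 0 (FreeMonoid.toList v ++ FreeMonoid.toList u) := by
        rw [List.count_append, List.count_append, Nat.add_comm]
      by_cases h : List.count 0 (FreeMonoid.toList u ++ FreeMonoid.toList v) = 0
      · rw [if_pos h, if_pos (hcnt ▸ h), sub_zero]
        exact Submodule.zero_mem _
      · rw [if_neg h, if_neg (hcnt ▸ h), ← hcnt, ← smul_sub]
        exact Submodule.smul_mem _ _ (rot_mem _ _)
    | add f g hf hg =>
      have heq : (MonoidAlgebra.of ℂ Wd) u * (f + g) - (f + g) * (MonoidAlgebra.of ℂ Wd) u
          = ((MonoidAlgebra.of ℂ Wd) u * f - f * (MonoidAlgebra.of ℂ Wd) u)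
            + ((MonoidAlgebra.of ℂ Wd) u * g - g * (MonoidAlgebra.of ℂ Wd) u) := by
        rw [mul_add, add_mul]; abel
      rw [heq, map_add]
      exact Submodule.add_mem _ hf hg
    | smul r f hf =>
      have heq : (MonoidAlgebra.of ℂ Wd) u * (r • f) - (r • f) * (MonoidAlgebra.of ℂ Wd) u
          = r • ((MonoidAlgebra.of ℂ Wd) u * f - f * (MonoidAlgebra.of ℂ Wd) u) := by
        rw [mul_smul_comm, smul_mul_assoc, smul_sub]
      rw [heq, map_smul]
      exact Submodule.smul_mem _ _ hf
  | add f g hf hg =>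
    have heq : (f + g) * b - b * (f + g) = (f * b - b * f) + (g * b - b * g) := by
      rw [mul_add, add_mul]; abel
    rw [heq, map_add]
    exact Submodule.add_mem _ hf hg
  | smul r f hf =>
    have heq : (r • f) * b - b * (r • f) = r • (f * b - b * f) := by
      rw [mul_smul_comm, smul_mul_assoc, smul_sub]
    rw [heq, map_smul]
    exact Submodule.smul_mem _ _ hf

lemma R_comm {a : B} (ha : a ∈ commSpanB) : Rmap a ∈ commSpanB := by
  induction ha using Submodule.span_induction with
  | mem x hx => obtain ⟨a, b, rfl⟩ := hx; exact R_comm_pair a b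
  | zero => rw [map_zero]; exact Submodule.zero_mem _
  | add x y hx hy hx' hy' => rw [map_add]; exact Submodule.add_mem _ hx' hy'
  | smul r x hx hx' => rw [map_smul]; exact Submodule.smul_mem _ _ hx'

lemma P0_mem (F : B) : P0 F ∈ spanY := by
  induction F using MonoidAlgebra.induction_on with
  | of w =>
    rw [of_eq_ow, P0, extMap_ow]
    split
    · rename_i h
      have h2 : FreeMonoid.toList w = List.replicate (FreeMonoid.toList w).length 1 := by
        rw [List.eq_replicate_length]
        intro b hb
        have hnotzero : b ≠ 0 := by
          intro hb0
          subst hb0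
          exact absurd (List.count_eq_zero.mp h) (fun hcon => hcon hb)
        have h01 : ∀ b : Fin 2, b ≠ 0 → b = 1 := by decide
        exact h01 b hnotzero
      rw [h2]
      exact Submodule.subset_span ⟨(FreeMonoid.toList w).length, rfl⟩
    · exact Submodule.zero_mem _
  | add f g hf hg => rw [map_add]; exact Submodule.add_mem _ hf hg
  | smul r f hf => rw [map_smul]; exact Submodule.smul_mem _ _ hf

/-! ### assembly in `B` -/

def TXB : Submodule ℂ B := Subalgebra.toSubmodule (Algebra.adjoin ℂ ({ow [0]} : Set B))
def TYB : Submodule ℂ B := Subalgebra.toSubmodule (Algebra.adjoin ℂ ({ow [1]} : Set B))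

lemma ow_replicate_pow (i : Fin 2) (n : ℕ) : ow (List.replicate n i) = ow [i] ^ n := by
  induction n with
  | zero => rfl
  | succ n ih =>
    rw [List.replicate_succ, show (i :: List.replicate n i) = [i] ++ List.replicate n i from rfl,
      ← ow_mul, ih, pow_succ']

lemma spanX_le_TXB : spanX ≤ TXB := by
  rw [spanX, Submodule.span_le]
  rintro x ⟨n, rfl⟩
  have hmem : ow (List.replicate n 0) ∈ Algebra.adjoin ℂ ({ow [0]} : Set B) := by
    rw [ow_replicate_pow]
    exact pow_mem (Algebra.subset_adjoin (Set.mem_singleton _)) n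
  exact hmem

lemma spanY_le_TYB : spanY ≤ TYB := by
  rw [spanY, Submodule.span_le]
  rintro x ⟨n, rfl⟩
  have hmem : ow (List.replicate n 1) ∈ Algebra.adjoin ℂ ({ow [1]} : Set B) := by
    rw [ow_replicate_pow]
    exact pow_mem (Algebra.subset_adjoin (Set.mem_singleton _)) n
  exact hmem

lemma main_B (F : B) (h : mulRevB (DB F) * ow [0] = ow [0] * mulRevB (DB F)) :
    F ∈ TXB ⊔ TYB ⊔ commSpanB := by
  have hc : mulRevB (DB F) ∈ spanX := stepA h
  have h1 : ow [0] * mulRevB (DB F) ∈ spanX := X_mul_spanX hc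
  have h2 : ow [0] * mulRevB (DB F) - Ecount F ∈ commSpanB := stepB F
  have hF : F = P0 F + Rmap (ow [0] * mulRevB (DB F))
      - Rmap (ow [0] * mulRevB (DB F) - Ecount F) := by
    rw [map_sub, R_E]
    abel
  rw [hF]
  have m1 : P0 F ∈ TYB := spanY_le_TYB (P0_mem F)
  have m2 : Rmap (ow [0] * mulRevB (DB F)) ∈ TXB := spanX_le_TXB (R_spanX h1)
  have m3 : Rmap (ow [0] * mulRevB (DB F) - Ecount F) ∈ commSpanB := R_comm h2
  refine Submodule.sub_mem _ (Submodule.add_mem _ ?_ ?_) ?_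
  · exact Submodule.mem_sup_left (Submodule.mem_sup_right m1)
  · exact Submodule.mem_sup_left (Submodule.mem_sup_left m2)
  · exact Submodule.mem_sup_right m3

end S6

namespace S6

def eqv : A2 ≃ₐ[ℂ] B := FreeAlgebra.equivMonoidAlgebraFreeMonoid

lemma eqv_iota (i : Fin 2) : eqv (FreeAlgebra.ι ℂ i) = ow [i] := by
  rw [eqv, FreeAlgebra.equivMonoidAlgebraFreeMonoid]
  show ((FreeAlgebra.lift ℂ fun x => (MonoidAlgebra.of ℂ Wd) (FreeMonoid.of x)))
      (FreeAlgebra.ι ℂ i) = ow [i]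
  rw [FreeAlgebra.lift_ι_apply]
  rfl

/-- the transported double derivation on `A2` -/
def amap : B ⊗[ℂ] B →ₐ[ℂ] A2 ⊗[ℂ] A2 :=
  Algebra.TensorProduct.map eqv.symm.toAlgHom eqv.symm.toAlgHom

def D' : A2 →ₗ[ℂ] A2 ⊗[ℂ] A2 := amap.toLinearMap ∘ₗ DB ∘ₗ eqv.toLinearMap

lemma D'_apply (a : A2) : D' a = amap (DB (eqv a)) := rfl

lemma D'_leibniz (a b : A2) :
    D' (a * b) = (a ⊗ₜ[ℂ] (1 : A2)) * D' b + D' a * ((1 : A2) ⊗ₜ[ℂ] b) := by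
  rw [D'_apply, map_mul, DB_leibniz, map_add, map_mul, map_mul]
  rw [D'_apply, D'_apply]
  congr 1
  · congr 1
    show (Algebra.TensorProduct.map eqv.symm.toAlgHom eqv.symm.toAlgHom) (eqv a ⊗ₜ[ℂ] 1) = _
    rw [Algebra.TensorProduct.map_tmul]
    simp
  · congr 1
    show (Algebra.TensorProduct.map eqv.symm.toAlgHom eqv.symm.toAlgHom) ((1:B) ⊗ₜ[ℂ] eqv b) = _
    rw [Algebra.TensorProduct.map_tmul]
    simp

lemma dW_x : dW [0] = (1 : B) ⊗ₜ[ℂ] (1 : B) := by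
  show (ow [0] ⊗ₜ[ℂ] (1 : B)) * dW [] + (if (0 : Fin 2) = 0 then (1 : B) ⊗ₜ ow [] else 0)
      = (1 : B) ⊗ₜ[ℂ] (1 : B)
  rw [if_pos rfl]
  show (ow [0] ⊗ₜ[ℂ] (1 : B)) * 0 + ((1 : B) ⊗ₜ ow []) = (1 : B) ⊗ₜ[ℂ] (1 : B)
  rw [mul_zero, zero_add, ow_nil]

lemma dW_y : dW [1] = 0 := by
  show (ow [1] ⊗ₜ[ℂ] (1 : B)) * dW [] + (if (1 : Fin 2) = 0 then (1 : B) ⊗ₜ ow [] else 0) = 0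
  rw [if_neg (by decide)]
  show (ow [1] ⊗ₜ[ℂ] (1 : B)) * 0 + 0 = 0
  rw [mul_zero, zero_add]

lemma D'_x : D' Xg = (1 : A2) ⊗ₜ[ℂ] (1 : A2) := by
  rw [D'_apply]
  show amap (DB (eqv (FreeAlgebra.ι ℂ 0))) = _
  rw [eqv_iota, DB_ow, dW_x]
  show (Algebra.TensorProduct.map eqv.symm.toAlgHom eqv.symm.toAlgHom) ((1:B) ⊗ₜ[ℂ] (1:B)) = _
  rw [Algebra.TensorProduct.map_tmul]
  simp

lemma D'_y : D' Yg = 0 := by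
  rw [D'_apply]
  show amap (DB (eqv (FreeAlgebra.ι ℂ 1))) = _
  rw [eqv_iota, DB_ow, dW_y, map_zero]

lemma D'_one : D' 1 = 0 := by
  have h := D'_leibniz 1 1
  rw [mul_one] at h
  have h2 : ((1:A2) ⊗ₜ[ℂ] (1:A2)) * D' 1 = D' 1 := by
    rw [← Algebra.TensorProduct.one_def, one_mul]
  have h3 : D' 1 * ((1:A2) ⊗ₜ[ℂ] (1:A2)) = D' 1 := by
    rw [← Algebra.TensorProduct.one_def, mul_one]
  rw [h2, h3] at h
  have := sub_eq_zero_of_eq h.symm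
  rw [add_sub_cancel_right] at this
  exact this

section Dunique
variable (D : A2 →ₗ[ℂ] A2 ⊗[ℂ] A2)
    (hLeib : ∀ u v : A2,
      D (u * v) = (u ⊗ₜ[ℂ] (1 : A2)) * D v + D u * ((1 : A2) ⊗ₜ[ℂ] v))
    (hx : D Xg = (1 : A2) ⊗ₜ[ℂ] (1 : A2)) (hy : D Yg = 0)

include hLeib in
lemma D_one : D 1 = 0 := by
  have h := hLeib 1 1
  rw [mul_one] at h
  have h2 : ((1:A2) ⊗ₜ[ℂ] (1:A2)) * D 1 = D 1 := by
    rw [← Algebra.TensorProduct.one_def, one_mul]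
  have h3 : D 1 * ((1:A2) ⊗ₜ[ℂ] (1:A2)) = D 1 := by
    rw [← Algebra.TensorProduct.one_def, mul_one]
  rw [h2, h3] at h
  have := sub_eq_zero_of_eq h.symm
  rw [add_sub_cancel_right] at this
  exact this

include hLeib hx hy in
lemma D_unique (a : A2) : D a = D' a := by
  induction a using FreeAlgebra.induction with
  | grade0 r =>
    rw [Algebra.algebraMap_eq_smul_one, map_smul, map_smul, D_one D hLeib, D'_one]
  | grade1 i =>
    rcases (show ∀ b : Fin 2, b = 0 ∨ b = 1 by decide) i with rfl | rfl
    · rw [show FreeAlgebra.ι ℂ (0 : Fin 2) = Xg from rfl, hx, D'_x]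
    · rw [show FreeAlgebra.ι ℂ (1 : Fin 2) = Yg from rfl, hy, D'_y]
  | mul a b ha hb => rw [hLeib, D'_leibniz, ha, hb]
  | add a b ha hb => rw [map_add, map_add, ha, hb]

end Dunique

lemma mulRev_amap (s : B ⊗[ℂ] B) : mulRev (amap s) = eqv.symm (mulRevB s) := by
  induction s with
  | zero => rw [map_zero, map_zero, map_zero, map_zero]
  | tmul a b =>
    show mulRev (Algebra.TensorProduct.map eqv.symm.toAlgHom eqv.symm.toAlgHom (a ⊗ₜ[ℂ] b)) = _
    rw [Algebra.TensorProduct.map_tmul]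
    show mulRev (eqv.symm a ⊗ₜ[ℂ] eqv.symm b) = _
    rw [mulRev, mulRevB]
    simp only [LinearMap.coe_comp, Function.comp_apply, LinearEquiv.coe_coe,
      TensorProduct.comm_tmul, LinearMap.mul'_apply, map_mul]
  | add x y hx hy => rw [map_add, map_add, map_add, map_add, hx, hy]

lemma Xg_eq : Xg = eqv.symm (ow [0]) := by
  rw [← eqv_iota 0]
  exact (AlgEquiv.symm_apply_apply _ _).symm

/-- transfer of the target submodule -/
lemma target_transfer {b : B} (hb : b ∈ TXB ⊔ TYB ⊔ commSpanB) :
    eqv.symm b ∈ (Subalgebra.toSubmodule (Algebra.adjoin ℂ ({Xg} : Set A2))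
      ⊔ Subalgebra.toSubmodule (Algebra.adjoin ℂ ({Yg} : Set A2))
      ⊔ commSpan) := by
  set T := (Subalgebra.toSubmodule (Algebra.adjoin ℂ ({Xg} : Set A2))
      ⊔ Subalgebra.toSubmodule (Algebra.adjoin ℂ ({Yg} : Set A2))
      ⊔ commSpan) with hT
  have hTX : ∀ x ∈ TXB, eqv.symm x ∈ T := by
    intro x hx
    have hx' : x ∈ Algebra.adjoin ℂ ({ow [0]} : Set B) := hx
    clear hx
    have : eqv.symm x ∈ Algebra.adjoin ℂ ({Xg} : Set A2) := by
      induction hx' using Algebra.adjoin_induction with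
      | mem y hy =>
        rcases hy with rfl
        rw [← Xg_eq]
        exact Algebra.subset_adjoin (Set.mem_singleton _)
      | algebraMap r => rw [AlgEquiv.commutes]; exact Subalgebra.algebraMap_mem _ r
      | add y z hy hz hy' hz' => rw [map_add]; exact add_mem hy' hz'
      | mul y z hy hz hy' hz' => rw [map_mul]; exact mul_mem hy' hz'
    exact Submodule.mem_sup_left (Submodule.mem_sup_left this)
  have hTY : ∀ x ∈ TYB, eqv.symm x ∈ T := by
    intro x hx
    have hx' : x ∈ Algebra.adjoin ℂ ({ow [1]} : Set B) := hx
    clear hx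
    have : eqv.symm x ∈ Algebra.adjoin ℂ ({Yg} : Set A2) := by
      induction hx' using Algebra.adjoin_induction with
      | mem y hy =>
        rcases hy with rfl
        rw [show ow [1] = eqv Yg from (eqv_iota 1).symm, AlgEquiv.symm_apply_apply]
        exact Algebra.subset_adjoin (Set.mem_singleton _)
      | algebraMap r => rw [AlgEquiv.commutes]; exact Subalgebra.algebraMap_mem _ r
      | add y z hy hz hy' hz' => rw [map_add]; exact add_mem hy' hz'
      | mul y z hy hz hy' hz' => rw [map_mul]; exact mul_mem hy' hz'
    exact Submodule.mem_sup_left (Submodule.mem_sup_right this)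
  have hTC : ∀ x ∈ commSpanB, eqv.symm x ∈ T := by
    intro x hx
    induction hx using Submodule.span_induction with
    | mem y hy =>
      obtain ⟨a, b, rfl⟩ := hy
      refine Submodule.mem_sup_right (Submodule.subset_span ?_)
      exact ⟨eqv.symm a, eqv.symm b, by rw [map_sub, map_mul, map_mul]⟩
    | zero => rw [map_zero]; exact Submodule.zero_mem _
    | add y z hy hz hy' hz' => rw [map_add]; exact Submodule.add_mem _ hy' hz'
    | smul r y hy hy' => rw [map_smul]; exact Submodule.smul_mem _ _ hy'
  rcases Submodule.mem_sup.mp hb with ⟨u, hu, v, hv, rfl⟩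
  rcases Submodule.mem_sup.mp hu with ⟨p, hp, q, hq, rfl⟩
  rw [map_add, map_add]
  exact Submodule.add_mem _ (Submodule.add_mem _ (hTX p hp) (hTY q hq)) (hTC v hv)

end S6

/-- If `(∂f/∂x)''(∂f/∂x)'` commutes with `x`, then `f ∈ ℂ[x] + ℂ[y] + [A,A]`. -/
theorem stmt_6 (D : A2 →ₗ[ℂ] A2 ⊗[ℂ] A2)
    (hLeib : ∀ u v : A2,
      D (u * v) = (u ⊗ₜ[ℂ] (1 : A2)) * D v + D u * ((1 : A2) ⊗ₜ[ℂ] v))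
    (hx : D Xg = (1 : A2) ⊗ₜ[ℂ] (1 : A2)) (hy : D Yg = 0)
    (f : A2)
    (hcomm : mulRev (D f) * Xg = Xg * mulRev (D f)) :
    f ∈ (Subalgebra.toSubmodule (Algebra.adjoin ℂ ({Xg} : Set A2))
      ⊔ Subalgebra.toSubmodule (Algebra.adjoin ℂ ({Yg} : Set A2))
      ⊔ commSpan) := by
  classical
  have hDf : mulRev (D f) = S6.eqv.symm (S6.mulRevB (S6.DB (S6.eqv f))) := by
    rw [S6.D_unique D hLeib hx hy f, S6.D'_apply, S6.mulRev_amap]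
  have hcomm' : S6.mulRevB (S6.DB (S6.eqv f)) * S6.ow [0]
      = S6.ow [0] * S6.mulRevB (S6.DB (S6.eqv f)) := by
    apply S6.eqv.symm.injective
    rw [map_mul, map_mul, ← hDf, ← S6.Xg_eq]
    exact hcomm
  have hmem := S6.main_B (S6.eqv f) hcomm'
  have := S6.target_transfer hmem
  rwa [AlgEquiv.symm_apply_apply] at this

end
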